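/- Suppose entropy satisfies concavity and the bound on convolutions: if μ is supported on a set of diameter ≤ ε and ν is any probability measure on ℝ, then H(μ * ν, I_γ) ≥ H(μ, I_γ) − O(1) for γ < ε. More precisely: for probability measures μ supported on [0, ε) and ν on ℝ, and γ < ε, H(μ * ν, I_γ) ≥ H(ν, I_ε) + H(μ, I_γ) − C for an absolute constant C. -/

import Mathlib

open MeasureTheory

/-- Convolution of measures on `ℝ` (pushforward of the product under addition). -/
noncomputable def mconv (μ ν : Measure ℝ) : Measure ℝ :=
  (μ.prod ν).map (fun p : ℝ × ℝ => p.1 + p.2)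

/-- The entropy (valued in `ℝ≥0∞`) of `μ` with respect to the partition `I_ε`
of `ℝ` into intervals `[kε, (k+1)ε)`. -/
noncomputable def entE (μ : Measure ℝ) (ε : ℝ) : ENNReal :=
  ∑' k : ℤ, ENNReal.ofReal
    (Real.negMulLog ((μ (Set.Ico ((k : ℝ) * ε) (((k : ℝ) + 1) * ε))).toReal))

section Aux
open Real Set
open scoped ENNReal NNReal

/-- The `k`-th cell of the partition of `ℝ` into intervals of length `c`. -/
def cell (c : ℝ) (k : ℤ) : Set ℝ := Set.Ico ((k : ℝ) * c) (((k : ℝ) + 1) * c)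

lemma cell_measurableSet (c : ℝ) (k : ℤ) : MeasurableSet (cell c k) :=
  measurableSet_Ico

lemma mem_cell_iff {c : ℝ} {k : ℤ} {x : ℝ} :
    x ∈ cell c k ↔ (k : ℝ) * c ≤ x ∧ x < ((k : ℝ) + 1) * c := Iff.rfl

lemma cell_pairwise_disjoint {c : ℝ} (hc : 0 < c) :
    Pairwise (Function.onFun Disjoint (cell c)) := by
  intro k l hkl
  simp only [Function.onFun, Set.disjoint_left]
  rintro x ⟨h1k, h2k⟩ ⟨h1l, h2l⟩
  rcases lt_or_gt_of_ne hkl with h | h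
  · have : ((k : ℝ) + 1) ≤ (l : ℝ) := by exact_mod_cast h
    nlinarith
  · have : ((l : ℝ) + 1) ≤ (k : ℝ) := by exact_mod_cast h
    nlinarith

lemma mem_cell_floor {c : ℝ} (hc : 0 < c) (x : ℝ) : x ∈ cell c ⌊x / c⌋ := by
  constructor
  · have := Int.floor_le (x / c)
    calc (⌊x / c⌋ : ℝ) * c ≤ (x / c) * c := by nlinarith
    _ = x := by field_simp
  · have := Int.lt_floor_add_one (x / c)
    calc x = (x / c) * c := by field_simp
    _ < ((⌊x / c⌋ : ℝ) + 1) * c := by nlinarith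

lemma cell_iUnion {c : ℝ} (hc : 0 < c) : (⋃ k : ℤ, cell c k) = Set.univ := by
  refine Set.eq_univ_of_forall fun x => Set.mem_iUnion.2 ⟨⌊x / c⌋, mem_cell_floor hc x⟩

lemma tsum_measure_cell (m : Measure ℝ) {c : ℝ} (hc : 0 < c) :
    ∑' k : ℤ, m (cell c k) = m Set.univ := by
  rw [← measure_iUnion (cell_pairwise_disjoint hc) (cell_measurableSet c), cell_iUnion hc]

/-- Tangent line bound for `negMulLog`. -/
lemma negMulLog_le_tangent {a b : ℝ} (ha : 0 ≤ a) (hb : 0 < b) :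
    negMulLog a ≤ negMulLog b + (-Real.log b - 1) * (a - b) := by
  rcases eq_or_lt_of_le ha with rfl | ha'
  · simp [negMulLog]
    nlinarith [Real.log_le_sub_one_of_pos hb]
  · have h := Real.log_le_sub_one_of_pos (show 0 < b / a by positivity)
    rw [Real.log_div hb.ne' ha'.ne'] at h
    have h2 := mul_le_mul_of_nonneg_left h (le_of_lt ha')
    have h3 : a * (b / a - 1) = b - a := by field_simp
    simp only [negMulLog]
    nlinarith [h2, h3]

lemma negMulLog_le_one {x : ℝ} (h0 : 0 ≤ x) (h1 : x ≤ 1) : negMulLog x ≤ 1 := by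
  have key := negMulLog_le_tangent h0 (show (0:ℝ) < Real.exp (-1) by positivity)
  rw [Real.log_exp] at key
  have he : Real.exp (-1) ≤ 1 := by
    rw [show (1:ℝ) = Real.exp 0 by simp]
    exact Real.exp_le_exp.2 (by norm_num)
  simp only [negMulLog, Real.log_exp] at key ⊢
  nlinarith [key, he]

/-- Per-term bound used for `∑ H ≤ H(sum) + S log n`. -/
lemma negMulLog_le_aux {w S : ℝ} (n : ℕ) (hn : 0 < n) (hw : 0 ≤ w) (hS : w ≤ S) :
    negMulLog w ≤ S / n - w + w * Real.log n - w * Real.log S := by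
  rcases eq_or_lt_of_le hw with rfl | hw'
  · simp only [negMulLog_zero, zero_mul, sub_zero, add_zero]
    have : (0:ℝ) ≤ S := hS
    positivity
  · have hS' : 0 < S := lt_of_lt_of_le hw' hS
    have hn' : (0:ℝ) < n := by exact_mod_cast hn
    have h := Real.log_le_sub_one_of_pos (show 0 < S / (n * w) by positivity)
    have hlog : Real.log (S / (n * w)) = Real.log S - Real.log n - Real.log w := by
      rw [Real.log_div hS'.ne' (by positivity), Real.log_mul hn'.ne' hw'.ne']
      ring
    rw [hlog] at h
    have h2 := mul_le_mul_of_nonneg_left h (le_of_lt hw')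
    simp only [negMulLog]
    have h3 : w * (S / (↑n * w) - 1) = S / ↑n - w := by field_simp
    nlinarith [h2, h3]

/-- Finite split bound: entropy of pieces is at most entropy of total plus `S log n`. -/
lemma sum_negMulLog_le {ι : Type*} (s : Finset ι) (w : ι → ℝ) (n : ℕ) (hn : 0 < n)
    (hw : ∀ i ∈ s, 0 ≤ w i) (hcard : s.card ≤ n) :
    ∑ i ∈ s, negMulLog (w i) ≤
      negMulLog (∑ i ∈ s, w i) + (∑ i ∈ s, w i) * Real.log n := by
  set S := ∑ i ∈ s, w i with hSdef
  have hS0 : 0 ≤ S := Finset.sum_nonneg hw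
  have h1 : ∑ i ∈ s, negMulLog (w i) ≤
      ∑ i ∈ s, (S / n - w i + w i * Real.log n - w i * Real.log S) := by
    refine Finset.sum_le_sum fun i hi => negMulLog_le_aux n hn (hw i hi) ?_
    exact Finset.single_le_sum hw hi
  have h2 : ∑ i ∈ s, (S / n - w i + w i * Real.log n - w i * Real.log S)
      = s.card * (S / n) - S + S * Real.log n - S * Real.log S := by
    rw [Finset.sum_sub_distrib, Finset.sum_add_distrib, Finset.sum_sub_distrib]
    rw [← Finset.sum_mul, ← Finset.sum_mul, Finset.sum_const, nsmul_eq_mul]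
  have h3 : (s.card : ℝ) * (S / n) ≤ S := by
    have : (s.card : ℝ) ≤ n := by exact_mod_cast hcard
    have hn' : (0:ℝ) < n := by exact_mod_cast hn
    have h4 : (s.card : ℝ) * (S / n) ≤ (n:ℝ) * (S / n) :=
      mul_le_mul_of_nonneg_right this (div_nonneg hS0 hn'.le)
    have h5 : (n:ℝ) * (S / n) = S := by field_simp
    linarith
  simp only [negMulLog] at h1 ⊢
  linarith [h1, h2.le, h2.ge, h3]

/-- ENNReal version of the split bound, for families with finite support. -/
lemma tsum_negMulLog_le {ι : Type*} [Countable ι] (g : ι → ℝ≥0∞) (s : Finset ι) (n : ℕ)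
    (hn : 0 < n) (hsupp : ∀ i ∉ s, g i = 0) (htot : ∑' i, g i ≤ 1) (hcard : s.card ≤ n) :
    ∑' i, ENNReal.ofReal (negMulLog (g i).toReal)
      ≤ ENNReal.ofReal (negMulLog (∑' i, g i).toReal)
        + (∑' i, g i) * ENNReal.ofReal (Real.log n) := by
  have hgle : ∀ i, g i ≤ 1 := fun i => le_trans (ENNReal.le_tsum i) htot
  have hne : ∀ i, g i ≠ ⊤ := fun i => lt_of_le_of_lt (hgle i) (by norm_num) |>.ne
  have hSs : ∑' i, g i = ∑ i ∈ s, g i := tsum_eq_sum hsupp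
  have hLs : ∑' i, ENNReal.ofReal (negMulLog (g i).toReal)
      = ∑ i ∈ s, ENNReal.ofReal (negMulLog (g i).toReal) := by
    refine tsum_eq_sum fun i hi => ?_
    rw [hsupp i hi]; simp
  have htR : (∑' i, g i).toReal = ∑ i ∈ s, (g i).toReal := by
    rw [hSs, ENNReal.toReal_sum fun i _ => hne i]
  have hw : ∀ i ∈ s, 0 ≤ (g i).toReal := fun i _ => ENNReal.toReal_nonneg
  have key := sum_negMulLog_le s (fun i => (g i).toReal) n hn hw hcard
  have hnn : ∀ i ∈ s, 0 ≤ negMulLog (g i).toReal := fun i _ =>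
    negMulLog_nonneg ENNReal.toReal_nonneg
      (by simpa using ENNReal.toReal_mono (show (1:ℝ≥0∞) ≠ ⊤ by norm_num) (hgle i))
  rw [hLs, ← ENNReal.ofReal_sum_of_nonneg hnn]
  have hS1 : (∑' i, g i).toReal ≤ 1 := by
    simpa using ENNReal.toReal_mono (show (1:ℝ≥0∞) ≠ ⊤ by norm_num) htot
  calc ENNReal.ofReal (∑ i ∈ s, negMulLog (g i).toReal)
      ≤ ENNReal.ofReal (negMulLog (∑' i, g i).toReal + (∑' i, g i).toReal * Real.log n) := by
        apply ENNReal.ofReal_le_ofReal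
        rw [htR]; exact key
    _ = ENNReal.ofReal (negMulLog (∑' i, g i).toReal)
        + ENNReal.ofReal ((∑' i, g i).toReal * Real.log n) := by
        rw [ENNReal.ofReal_add (negMulLog_nonneg ENNReal.toReal_nonneg hS1)]
        positivity
    _ = ENNReal.ofReal (negMulLog (∑' i, g i).toReal)
        + (∑' i, g i) * ENNReal.ofReal (Real.log n) := by
        rw [ENNReal.ofReal_mul ENNReal.toReal_nonneg,
          ENNReal.ofReal_toReal (by rw [hSs]; exact (ENNReal.sum_lt_top.2
            fun i _ => (hne i).lt_top).ne)]

/-- ENNReal superadditivity of `negMulLog` (merging decreases entropy). -/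
lemma negMulLog_tsum_le {ι : Type*} [Countable ι] (g : ι → ℝ≥0∞) (htot : ∑' i, g i ≤ 1) :
    ENNReal.ofReal (negMulLog (∑' i, g i).toReal)
      ≤ ∑' i, ENNReal.ofReal (negMulLog (g i).toReal) := by
  set S := ∑' i, g i with hSdef
  have hSne : S ≠ ⊤ := lt_of_le_of_lt htot (by norm_num) |>.ne
  have hgle : ∀ i, g i ≤ S := fun i => ENNReal.le_tsum i
  have hgne : ∀ i, g i ≠ ⊤ := fun i => lt_of_le_of_lt (hgle i) hSne.lt_top |>.ne
  have h1 : ENNReal.ofReal (negMulLog S.toReal)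
      = S * ENNReal.ofReal (-Real.log S.toReal) := by
    rw [negMulLog, neg_mul, ← mul_neg, ENNReal.ofReal_mul ENNReal.toReal_nonneg,
      ENNReal.ofReal_toReal hSne]
  rw [h1, hSdef, ← ENNReal.tsum_mul_right]
  refine ENNReal.tsum_le_tsum fun i => ?_
  rcases eq_or_ne (g i) 0 with h0 | h0
  · simp [h0]
  · have hpos : 0 < (g i).toReal := ENNReal.toReal_pos h0 (hgne i)
    have : g i * ENNReal.ofReal (-Real.log S.toReal)
        = ENNReal.ofReal ((g i).toReal * (-Real.log S.toReal)) := by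
      rw [ENNReal.ofReal_mul ENNReal.toReal_nonneg, ENNReal.ofReal_toReal (hgne i)]
    rw [this]
    apply ENNReal.ofReal_le_ofReal
    rw [negMulLog, neg_mul, ← mul_neg]
    apply mul_le_mul_of_nonneg_left _ ENNReal.toReal_nonneg
    have := Real.log_le_log hpos (ENNReal.toReal_mono hSne (hgle i))
    linarith

lemma int_mem_pair {a : ℝ} {i : ℤ} (h1 : a - 1 < (i:ℝ)) (h2 : (i:ℝ) < a + 1) :
    i = ⌊a⌋ ∨ i = ⌊a⌋ + 1 := by
  have hl : ⌊a⌋ < i + 1 := Int.floor_lt.mpr (by push_cast; linarith)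
  have hr : i - 1 ≤ ⌊a⌋ := Int.le_floor.mpr (by push_cast; linarith)
  omega

lemma int_mem_triple {a : ℝ} {i : ℤ} (h1 : a - 2 < (i:ℝ)) (h2 : (i:ℝ) < a + 1) :
    i = ⌊a⌋ - 1 ∨ i = ⌊a⌋ ∨ i = ⌊a⌋ + 1 := by
  have hl : ⌊a⌋ < i + 2 := Int.floor_lt.mpr (by push_cast; linarith)
  have hr : i - 1 ≤ ⌊a⌋ := Int.le_floor.mpr (by push_cast; linarith)
  omega

lemma entE_eq (μ : Measure ℝ) (ε : ℝ) :
    entE μ ε = ∑' k : ℤ, ENNReal.ofReal (negMulLog ((μ (cell ε k)).toReal)) := rfl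

/-- Sum of measures of intersections with a partition. -/
lemma tsum_measure_inter_partition (m : Measure ℝ) {A : Set ℝ} (hA : MeasurableSet A)
    {f : ℤ → Set ℝ} (hf : ∀ k, MeasurableSet (f k))
    (hdisj : Pairwise (Function.onFun Disjoint f)) (hcov : (⋃ k, f k) = Set.univ) :
    ∑' k, m (A ∩ f k) = m A := by
  rw [← measure_iUnion (fun k l hkl => ((hdisj hkl).inter_left' A).inter_right' A)
      (fun k => hA.inter (hf k)), ← Set.inter_iUnion, hcov, Set.inter_univ]

lemma pre_measurableSet {c : ℝ} (y : ℝ) (k : ℤ) :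
    MeasurableSet ((fun x => x + y) ⁻¹' cell c k) :=
  (measurable_add_const y) (cell_measurableSet c k)

lemma pre_pairwise_disjoint {c : ℝ} (hc : 0 < c) (y : ℝ) :
    Pairwise (Function.onFun Disjoint (fun k => (fun x : ℝ => x + y) ⁻¹' cell c k)) :=
  fun _ _ hkl => Disjoint.preimage _ (cell_pairwise_disjoint hc hkl)

lemma pre_iUnion {c : ℝ} (hc : 0 < c) (y : ℝ) :
    (⋃ k : ℤ, (fun x : ℝ => x + y) ⁻¹' cell c k) = Set.univ := by
  rw [← Set.preimage_iUnion, cell_iUnion hc, Set.preimage_univ]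

/-- Entropy of the partition shifted by `y` differs by at most `log 2`. -/
lemma shifted_entropy (μ : Measure ℝ) [IsProbabilityMeasure μ] {γ : ℝ} (hγ : 0 < γ) (y : ℝ) :
    entE μ γ ≤ (∑' j : ℤ, ENNReal.ofReal (negMulLog
        ((μ ((fun x => x + y) ⁻¹' cell γ j)).toReal))) + ENNReal.ofReal (Real.log 2) := by
  set pre := fun j : ℤ => (fun x : ℝ => x + y) ⁻¹' cell γ j with hpre
  set m := fun (i j : ℤ) => μ (cell γ i ∩ pre j) with hm
  have hrow : ∀ i, ∑' j, m i j = μ (cell γ i) := fun i =>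
    tsum_measure_inter_partition μ (cell_measurableSet γ i) (pre_measurableSet y)
      (pre_pairwise_disjoint hγ y) (pre_iUnion hγ y)
  have hcol : ∀ j, ∑' i, m i j = μ (pre j) := by
    intro j
    have := tsum_measure_inter_partition μ (pre_measurableSet y (c := γ) j)
      (cell_measurableSet γ) (cell_pairwise_disjoint hγ) (cell_iUnion hγ)
    simpa [hm, Set.inter_comm] using this
  have step1 : entE μ γ ≤ ∑' i, ∑' j, ENNReal.ofReal (negMulLog ((m i j).toReal)) := by
    rw [entE_eq]
    refine ENNReal.tsum_le_tsum fun i => ?_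
    rw [← hrow i]
    exact negMulLog_tsum_le _ (by rw [hrow i]; exact prob_le_one)
  have step2 : ∑' i, ∑' j, ENNReal.ofReal (negMulLog ((m i j).toReal))
      = ∑' j, ∑' i, ENNReal.ofReal (negMulLog ((m i j).toReal)) := ENNReal.tsum_comm
  have step3 : ∀ j, ∑' i, ENNReal.ofReal (negMulLog ((m i j).toReal))
      ≤ ENNReal.ofReal (negMulLog ((μ (pre j)).toReal))
        + μ (pre j) * ENNReal.ofReal (Real.log 2) := by
    intro j
    set a := ((j:ℝ) * γ - y) / γ with ha
    have key := tsum_negMulLog_le (fun i => m i j) ({⌊a⌋, ⌊a⌋ + 1} : Finset ℤ) 2 (by norm_num)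
      ?_ (by rw [hcol j]; exact prob_le_one) (Finset.card_insert_le _ _ |>.trans (by simp))
    · rw [hcol j] at key
      norm_num at key; exact key
    · intro i hi
      by_contra hne
      obtain ⟨x, ⟨⟨hx1, hx2⟩, hx3, hx4⟩⟩ := nonempty_of_measure_ne_zero hne
      simp only [hpre, Set.mem_preimage, cell, Set.mem_Ico] at hx3 hx4
      have hag : a * γ = (j:ℝ) * γ - y := by rw [ha]; field_simp
      have h1 : a - 1 < (i:ℝ) := by
        have : a * γ < ((i:ℝ) + 1) * γ := by nlinarith
        nlinarith
      have h2 : (i:ℝ) < a + 1 := by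
        have : (i:ℝ) * γ < (a + 1) * γ := by nlinarith
        nlinarith
      rcases int_mem_pair h1 h2 with h | h <;> simp [h] at hi
  calc entE μ γ ≤ ∑' j, ∑' i, ENNReal.ofReal (negMulLog ((m i j).toReal)) := by
        rw [← step2]; exact step1
    _ ≤ ∑' j, (ENNReal.ofReal (negMulLog ((μ (pre j)).toReal))
        + μ (pre j) * ENNReal.ofReal (Real.log 2)) := ENNReal.tsum_le_tsum step3
    _ = (∑' j, ENNReal.ofReal (negMulLog ((μ (pre j)).toReal)))
        + (∑' j, μ (pre j)) * ENNReal.ofReal (Real.log 2) := by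
        rw [ENNReal.tsum_add, ENNReal.tsum_mul_right]
    _ = _ := by
        have : ∑' j, μ (pre j) = 1 := by
          rw [← measure_iUnion (pre_pairwise_disjoint hγ y) (pre_measurableSet y),
            pre_iUnion hγ y, measure_univ]
        rw [this, one_mul]

lemma integrable_of_le_one {α : Type*} [MeasurableSpace α] (ρ : Measure α)
    [IsFiniteMeasure ρ] {g : α → ℝ} (hmeas : Measurable g) (h0 : ∀ y, 0 ≤ g y)
    (h1 : ∀ y, g y ≤ 1) : Integrable g ρ := by
  refine (integrable_const (1:ℝ)).mono' hmeas.aestronglyMeasurable ?_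
  exact .of_forall fun y => by rw [Real.norm_eq_abs, abs_of_nonneg (h0 y)]; exact h1 y

lemma integrable_negMulLog_of_le_one {α : Type*} [MeasurableSpace α] (ρ : Measure α)
    [IsFiniteMeasure ρ] {g : α → ℝ} (hmeas : Measurable g) (h0 : ∀ y, 0 ≤ g y)
    (h1 : ∀ y, g y ≤ 1) : Integrable (fun y => negMulLog (g y)) ρ :=
  integrable_of_le_one ρ (Real.continuous_negMulLog.measurable.comp hmeas)
    (fun y => negMulLog_nonneg (h0 y) (h1 y)) (fun y => negMulLog_le_one (h0 y) (h1 y))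

/-- Jensen's inequality for `negMulLog`, via the tangent-line bound. -/
lemma jensen_negMulLog {α : Type*} [MeasurableSpace α] (ρ : Measure α)
    [IsProbabilityMeasure ρ] {g : α → ℝ} (hmeas : Measurable g) (h0 : ∀ y, 0 ≤ g y)
    (h1 : ∀ y, g y ≤ 1) :
    ∫ y, negMulLog (g y) ∂ρ ≤ negMulLog (∫ y, g y ∂ρ) := by
  have hgint : Integrable g ρ := integrable_of_le_one ρ hmeas h0 h1
  have hnint : Integrable (fun y => negMulLog (g y)) ρ :=
    integrable_negMulLog_of_le_one ρ hmeas h0 h1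
  set b := ∫ y, g y ∂ρ with hb
  have hb0 : 0 ≤ b := integral_nonneg h0
  rcases eq_or_lt_of_le hb0 with hb' | hb'
  · have hzero : g =ᵐ[ρ] 0 :=
      (integral_eq_zero_iff_of_nonneg h0 hgint).mp hb'.symm
    have : (fun y => negMulLog (g y)) =ᵐ[ρ] 0 := by
      filter_upwards [hzero] with y hy
      simp [Pi.zero_apply] at hy
      simp [hy]
    rw [integral_congr_ae this]
    simp [← hb', hb'.symm]
  · have hpt : ∀ y, negMulLog (g y) ≤ negMulLog b + (-Real.log b - 1) * (g y - b) :=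
      fun y => negMulLog_le_tangent (h0 y) hb'
    have hrint : Integrable (fun y => negMulLog b + (-Real.log b - 1) * (g y - b)) ρ :=
      (integrable_const _).add (((hgint.sub (integrable_const b)).const_mul _))
    calc ∫ y, negMulLog (g y) ∂ρ
        ≤ ∫ y, (negMulLog b + (-Real.log b - 1) * (g y - b)) ∂ρ :=
          integral_mono hnint hrint hpt
      _ = negMulLog b + (-Real.log b - 1) * (b - b) := by
          have h2 : Integrable (fun y => (-Real.log b - 1) * (g y - b)) ρ := by
            exact (hgint.sub (integrable_const b)).const_mul _
          have h3 : Integrable (fun y => g y - b) ρ := by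
            exact hgint.sub (integrable_const b)
          rw [integral_add (integrable_const _) h2, integral_const, integral_const_mul,
            integral_sub hgint (integrable_const b), integral_const]
          simp [measure_univ, ← hb]
      _ = negMulLog b := by ring

/-- general partition sum lemma -/
lemma tsum_measure_inter_partition' {α : Type*} [MeasurableSpace α] (m : Measure α)
    {A : Set α} (hA : MeasurableSet A) {f : ℤ → Set α} (hf : ∀ k, MeasurableSet (f k))
    (hdisj : Pairwise (Function.onFun Disjoint f)) (hcov : (⋃ k, f k) = Set.univ) :
    ∑' k, m (A ∩ f k) = m A := by
  rw [← measure_iUnion (fun k l hkl => ((hdisj hkl).inter_left' A).inter_right' A)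
      (fun k => hA.inter (hf k)), ← Set.inter_iUnion, hcov, Set.inter_univ]

/-- The joint mass of (ε-cell of y, γ-cell of x+y). -/
noncomputable def jointT (μ ν : Measure ℝ) (ε γ : ℝ) (k j : ℤ) : ℝ≥0∞ :=
  (μ.prod ν) ((Set.univ ×ˢ cell ε k) ∩ ((fun p : ℝ × ℝ => p.1 + p.2) ⁻¹' cell γ j))

lemma measurable_add_pair : Measurable (fun p : ℝ × ℝ => p.1 + p.2) :=
  measurable_fst.add measurable_snd

lemma jointT_set_measurable (ε γ : ℝ) (k j : ℤ) :
    MeasurableSet ((Set.univ ×ˢ cell ε k) ∩ ((fun p : ℝ × ℝ => p.1 + p.2) ⁻¹' cell γ j)) :=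
  (MeasurableSet.univ.prod (cell_measurableSet ε k)).inter
    (measurable_add_pair (cell_measurableSet γ j))

lemma jointT_eq_lintegral (μ ν : Measure ℝ) [SFinite μ] [SFinite ν] (ε γ : ℝ) (k j : ℤ) :
    jointT μ ν ε γ k j
      = ∫⁻ y in cell ε k, μ ((fun x => x + y) ⁻¹' cell γ j) ∂ν := by
  rw [jointT, Measure.prod_apply_symm (jointT_set_measurable ε γ k j),
    ← lintegral_indicator (cell_measurableSet ε k)]
  refine lintegral_congr fun y => ?_
  by_cases hy : y ∈ cell ε k
  · rw [Set.indicator_of_mem hy]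
    congr 1
    ext x
    simp [Set.mem_preimage, Set.mem_prod, hy]
  · rw [Set.indicator_of_notMem hy]
    have : ((fun x => (x, y)) ⁻¹'
        ((Set.univ ×ˢ cell ε k) ∩ ((fun p : ℝ × ℝ => p.1 + p.2) ⁻¹' cell γ j))) = ∅ := by
      ext x
      simp [Set.mem_preimage, Set.mem_prod, hy]
    rw [this, measure_empty]

lemma tsum_G (μ : Measure ℝ) [IsProbabilityMeasure μ] {γ : ℝ} (hγ : 0 < γ) (y : ℝ) :
    ∑' j : ℤ, μ ((fun x => x + y) ⁻¹' cell γ j) = 1 := by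
  rw [← measure_iUnion (pre_pairwise_disjoint hγ y) (pre_measurableSet y),
    pre_iUnion hγ y, measure_univ]

/-- Per-cell lower bound (conditional entropy step). -/
lemma claim_k (μ ν : Measure ℝ) [IsProbabilityMeasure μ] [IsProbabilityMeasure ν]
    {ε γ : ℝ} (hγ : 0 < γ) (hε : 0 < ε) (k : ℤ) :
    ENNReal.ofReal (negMulLog ((ν (cell ε k)).toReal))
      + ν (cell ε k) * (entE μ γ - ENNReal.ofReal (Real.log 2))
    ≤ ∑' j : ℤ, ENNReal.ofReal (negMulLog ((jointT μ ν ε γ k j).toReal)) := by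
  set G := fun (j : ℤ) (y : ℝ) => μ ((fun x => x + y) ⁻¹' cell γ j) with hG
  have hGmeas : ∀ j, Measurable (G j) := by
    intro j
    have : (fun y => μ ((fun x => (x, y)) ⁻¹'
        ((fun p : ℝ × ℝ => p.1 + p.2) ⁻¹' cell γ j))) = G j := by
      funext y; rfl
    rw [← this]
    exact measurable_measure_prodMk_right (measurable_add_pair (cell_measurableSet γ j))
  have hGle : ∀ j y, G j y ≤ 1 := fun j y => prob_le_one
  have hGne : ∀ j y, G j y ≠ ⊤ := fun j y => ((hGle j y).trans_lt (by norm_num)).ne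
  set p := ν (cell ε k) with hp
  rcases eq_or_ne p 0 with hp0 | hp0
  · rw [hp0]
    simp
  · have hple : p ≤ 1 := prob_le_one
    have hpne : p ≠ ⊤ := (hple.trans_lt (by norm_num)).ne
    set ρ : Measure ℝ := ν.restrict (cell ε k) with hρ
    have hρuniv : ρ Set.univ = p := by
      rw [hρ, Measure.restrict_apply MeasurableSet.univ, Set.univ_inter]
    set ρt : Measure ℝ := p⁻¹ • ρ with hρt
    haveI : IsProbabilityMeasure ρt := by
      constructor
      rw [hρt, Measure.smul_apply, hρuniv, smul_eq_mul, ENNReal.inv_mul_cancel hp0 hpne]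
    have hρeq : (p • ρt) = ρ := by
      rw [hρt, smul_smul, ENNReal.mul_inv_cancel hp0 hpne, one_smul]
    set g := fun (j : ℤ) (y : ℝ) => (G j y).toReal with hg
    have hgmeas : ∀ j, Measurable (g j) := fun j => (hGmeas j).ennreal_toReal
    have hg0 : ∀ j y, 0 ≤ g j y := fun j y => ENNReal.toReal_nonneg
    have hg1 : ∀ j y, g j y ≤ 1 := fun j y => by
      simpa using ENNReal.toReal_mono (show (1:ℝ≥0∞) ≠ ⊤ by norm_num) (hGle j y)
    set A := fun (j : ℤ) => ∫ y, g j y ∂ρt with hA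
    have hA0 : ∀ j, 0 ≤ A j := fun j => integral_nonneg (hg0 j)
    have hA1 : ∀ j, A j ≤ 1 := by
      intro j
      calc A j ≤ ∫ (_ : ℝ), (1:ℝ) ∂ρt :=
            integral_mono (integrable_of_le_one ρt (hgmeas j) (hg0 j) (hg1 j))
              (integrable_const 1) (hg1 j)
        _ = 1 := by simp
    have hofA : ∀ j, ENNReal.ofReal (A j) = ∫⁻ y, G j y ∂ρt := by
      intro j
      rw [hA, ofReal_integral_eq_lintegral_ofReal
        (integrable_of_le_one ρt (hgmeas j) (hg0 j) (hg1 j)) (.of_forall (hg0 j))]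
      exact lintegral_congr fun y => ENNReal.ofReal_toReal (hGne j y)
    have hT : ∀ j, jointT μ ν ε γ k j = p * ENNReal.ofReal (A j) := by
      intro j
      rw [jointT_eq_lintegral μ ν ε γ k j, hofA j]
      rw [show (∫⁻ y in cell ε k, G j y ∂ν) = ∫⁻ y, G j y ∂ρ from rfl, ← hρeq,
        lintegral_smul_measure, smul_eq_mul]
    have hTtoReal : ∀ j, (jointT μ ν ε γ k j).toReal = p.toReal * A j := by
      intro j
      rw [hT j, ENNReal.toReal_mul, ENNReal.toReal_ofReal (hA0 j)]
    have hptR0 : 0 ≤ p.toReal := ENNReal.toReal_nonneg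
    have hptR1 : p.toReal ≤ 1 := by
      simpa using ENNReal.toReal_mono (show (1:ℝ≥0∞) ≠ ⊤ by norm_num) hple
    -- decompose each term
    have hdec : ∀ j, ENNReal.ofReal (negMulLog ((jointT μ ν ε γ k j).toReal))
        = ENNReal.ofReal (A j * negMulLog p.toReal)
          + ENNReal.ofReal (p.toReal * negMulLog (A j)) := by
      intro j
      rw [hTtoReal j, negMulLog_mul, ENNReal.ofReal_add
        (mul_nonneg (hA0 j) (negMulLog_nonneg hptR0 hptR1))
        (mul_nonneg hptR0 (negMulLog_nonneg (hA0 j) (hA1 j)))]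
    have hsum : ∑' j : ℤ, ENNReal.ofReal (negMulLog ((jointT μ ν ε γ k j).toReal))
        = (∑' j : ℤ, ENNReal.ofReal (A j * negMulLog p.toReal))
          + ∑' j : ℤ, ENNReal.ofReal (p.toReal * negMulLog (A j)) := by
      rw [← ENNReal.tsum_add]
      exact tsum_congr hdec
    -- first sum equals ofReal (negMulLog p.toReal)
    have hsum1 : (∑' j : ℤ, ENNReal.ofReal (A j * negMulLog p.toReal))
        = ENNReal.ofReal (negMulLog p.toReal) := by
      have h1 : ∀ j : ℤ, ENNReal.ofReal (A j * negMulLog p.toReal)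
          = ENNReal.ofReal (A j) * ENNReal.ofReal (negMulLog p.toReal) := fun j =>
        ENNReal.ofReal_mul (hA0 j)
      have h2 : ∑' j : ℤ, ENNReal.ofReal (A j) = 1 := by
        have := lintegral_tsum (μ := ρt) (f := fun j y => G j y)
          (fun j => (hGmeas j).aemeasurable)
        calc ∑' j : ℤ, ENNReal.ofReal (A j) = ∑' j : ℤ, ∫⁻ y, G j y ∂ρt :=
              tsum_congr hofA
          _ = ∫⁻ y, ∑' j : ℤ, G j y ∂ρt := (lintegral_tsum
              (fun j => (hGmeas j).aemeasurable)).symm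
          _ = ∫⁻ _, 1 ∂ρt := lintegral_congr fun y => tsum_G μ hγ y
          _ = 1 := by simp
      calc (∑' j : ℤ, ENNReal.ofReal (A j * negMulLog p.toReal))
          = (∑' j : ℤ, ENNReal.ofReal (A j)) * ENNReal.ofReal (negMulLog p.toReal) := by
            rw [← ENNReal.tsum_mul_right]; exact tsum_congr h1
        _ = ENNReal.ofReal (negMulLog p.toReal) := by rw [h2, one_mul]
    -- second sum is at least p * (entE μ γ - log 2)
    have hsum2 : p * (entE μ γ - ENNReal.ofReal (Real.log 2))
        ≤ ∑' j : ℤ, ENNReal.ofReal (p.toReal * negMulLog (A j)) := by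
      have hjen : ∀ j, ENNReal.ofReal (∫ y, negMulLog (g j y) ∂ρt)
          ≤ ENNReal.ofReal (negMulLog (A j)) :=
        fun j => ENNReal.ofReal_le_ofReal
          (jensen_negMulLog ρt (hgmeas j) (hg0 j) (hg1 j))
      have hterm : ∀ j, p * ∫⁻ y, ENNReal.ofReal (negMulLog (g j y)) ∂ρt
          ≤ ENNReal.ofReal (p.toReal * negMulLog (A j)) := by
        intro j
        rw [← ofReal_integral_eq_lintegral_ofReal
          (integrable_negMulLog_of_le_one ρt (hgmeas j) (hg0 j) (hg1 j))
          (.of_forall fun y => negMulLog_nonneg (hg0 j y) (hg1 j y))]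
        calc p * ENNReal.ofReal (∫ y, negMulLog (g j y) ∂ρt)
            ≤ p * ENNReal.ofReal (negMulLog (A j)) :=
              mul_le_mul_right (hjen j) p
          _ = ENNReal.ofReal (p.toReal * negMulLog (A j)) := by
              rw [ENNReal.ofReal_mul hptR0, ENNReal.ofReal_toReal hpne]
      calc p * (entE μ γ - ENNReal.ofReal (Real.log 2))
          ≤ p * ∫⁻ y, ∑' j : ℤ, ENNReal.ofReal (negMulLog (g j y)) ∂ρt := by
            refine mul_le_mul_right ?_ p
            have hbound : ∀ y : ℝ, entE μ γ - ENNReal.ofReal (Real.log 2)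
                ≤ ∑' j : ℤ, ENNReal.ofReal (negMulLog (g j y)) := by
              intro y
              rw [tsub_le_iff_right]
              exact shifted_entropy μ hγ y
            calc entE μ γ - ENNReal.ofReal (Real.log 2)
                = ∫⁻ _, (entE μ γ - ENNReal.ofReal (Real.log 2)) ∂ρt := by simp
              _ ≤ ∫⁻ y, ∑' j : ℤ, ENNReal.ofReal (negMulLog (g j y)) ∂ρt :=
                  lintegral_mono hbound
        _ = p * ∑' j : ℤ, ∫⁻ y, ENNReal.ofReal (negMulLog (g j y)) ∂ρt := by
            rw [lintegral_tsum (f := fun (j : ℤ) (y : ℝ) => ENNReal.ofReal (negMulLog (g j y)))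
              (fun j => ((Real.continuous_negMulLog.measurable.comp
                (hgmeas j)).ennreal_ofReal).aemeasurable)]
        _ = ∑' j : ℤ, p * ∫⁻ y, ENNReal.ofReal (negMulLog (g j y)) ∂ρt := by
            rw [ENNReal.tsum_mul_left]
        _ ≤ ∑' j : ℤ, ENNReal.ofReal (p.toReal * negMulLog (A j)) :=
            ENNReal.tsum_le_tsum hterm
    rw [hsum, hsum1]
    exact add_le_add_right hsum2 _

section Astep
variable (μ ν : Measure ℝ) [IsProbabilityMeasure μ] [IsProbabilityMeasure ν]

lemma prodcell_pairwise_disjoint {ε : ℝ} (hε : 0 < ε) :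
    Pairwise (Function.onFun Disjoint (fun k : ℤ => (Set.univ : Set ℝ) ×ˢ cell ε k)) := by
  intro k l hkl
  simp only [Function.onFun, Set.disjoint_left]
  rintro ⟨x, y⟩ h1 h2
  rw [Set.mem_prod] at h1 h2
  exact Set.disjoint_left.mp (cell_pairwise_disjoint hε hkl) h1.2 h2.2

lemma prodcell_iUnion {ε : ℝ} (hε : 0 < ε) :
    (⋃ k : ℤ, (Set.univ : Set ℝ) ×ˢ cell ε k) = Set.univ := by
  refine Set.eq_univ_of_forall fun p => Set.mem_iUnion.2 ⟨⌊p.2 / ε⌋, ?_⟩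
  rw [Set.mem_prod]
  exact ⟨Set.mem_univ _, mem_cell_floor hε p.2⟩

lemma mconv_univ : mconv μ ν Set.univ = 1 := by
  rw [mconv, Measure.map_apply measurable_add_pair MeasurableSet.univ, Set.preimage_univ,
    measure_univ]

lemma tsum_jointT_col {ε γ : ℝ} (hε : 0 < ε) (j : ℤ) :
    ∑' k : ℤ, jointT μ ν ε γ k j = mconv μ ν (cell γ j) := by
  rw [mconv, Measure.map_apply measurable_add_pair (cell_measurableSet γ j)]
  have := tsum_measure_inter_partition' (μ.prod ν)
    (A := (fun p : ℝ × ℝ => p.1 + p.2) ⁻¹' cell γ j)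
    (measurable_add_pair (cell_measurableSet γ j))
    (f := fun k : ℤ => (Set.univ : Set ℝ) ×ˢ cell ε k)
    (fun k => MeasurableSet.univ.prod (cell_measurableSet ε k))
    (prodcell_pairwise_disjoint hε) (prodcell_iUnion hε)
  rw [← this]
  exact tsum_congr fun k => by rw [jointT, Set.inter_comm]

lemma jointT_vanish {ε γ : ℝ} (hγ : 0 < γ) (hγε : γ < ε) (hμ : μ (Set.Ico 0 ε) = 1)
    (j k : ℤ) (hk : ¬(k = ⌊(j:ℝ) * γ / ε⌋ - 1 ∨ k = ⌊(j:ℝ) * γ / ε⌋ ∨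
      k = ⌊(j:ℝ) * γ / ε⌋ + 1)) :
    jointT μ ν ε γ k j = 0 := by
  have hε : 0 < ε := hγ.trans hγε
  set a := (j:ℝ) * γ / ε with ha
  have haε : a * ε = (j:ℝ) * γ := by rw [ha]; field_simp
  have hcompl : μ (Set.Ico 0 ε)ᶜ = 0 := by
    rw [measure_compl measurableSet_Ico (measure_ne_top μ _), hμ, measure_univ, tsub_self]
  have hempty : ((Set.Ico (0:ℝ) ε ×ˢ cell ε k)
      ∩ ((fun p : ℝ × ℝ => p.1 + p.2) ⁻¹' cell γ j)) = ∅ := by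
    rw [Set.eq_empty_iff_forall_notMem]
    rintro ⟨x, y⟩ ⟨hmem, hsum⟩
    rw [Set.mem_prod] at hmem
    obtain ⟨⟨hx0, hxε⟩, hy1, hy2⟩ := hmem
    obtain ⟨hs1, hs2⟩ := hsum
    simp only [cell, Set.mem_Ico] at hy1 hy2 hs1 hs2 ⊢
    have h2 : (k:ℝ) < a + 1 := by nlinarith
    have h1 : a - 2 < (k:ℝ) := by nlinarith
    exact hk (int_mem_triple h1 h2)
  have hsub : ((Set.univ ×ˢ cell ε k) ∩ ((fun p : ℝ × ℝ => p.1 + p.2) ⁻¹' cell γ j))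
      ⊆ ((Set.Ico (0:ℝ) ε ×ˢ cell ε k) ∩ ((fun p : ℝ × ℝ => p.1 + p.2) ⁻¹' cell γ j))
        ∪ ((Set.Ico (0:ℝ) ε)ᶜ ×ˢ (Set.univ : Set ℝ)) := by
    rintro ⟨x, y⟩ ⟨hmem, hsum⟩
    rw [Set.mem_prod] at hmem
    by_cases hx : x ∈ Set.Ico (0:ℝ) ε
    · exact Or.inl ⟨Set.mem_prod.2 ⟨hx, hmem.2⟩, hsum⟩
    · exact Or.inr (Set.mem_prod.2 ⟨hx, Set.mem_univ _⟩)
  refine le_antisymm ?_ zero_le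
  calc jointT μ ν ε γ k j ≤ (μ.prod ν)
        (((Set.Ico (0:ℝ) ε ×ˢ cell ε k) ∩ ((fun p : ℝ × ℝ => p.1 + p.2) ⁻¹' cell γ j))
          ∪ ((Set.Ico (0:ℝ) ε)ᶜ ×ˢ (Set.univ : Set ℝ))) := measure_mono hsub
    _ ≤ (μ.prod ν) ((Set.Ico (0:ℝ) ε ×ˢ cell ε k)
          ∩ ((fun p : ℝ × ℝ => p.1 + p.2) ⁻¹' cell γ j))
        + (μ.prod ν) (((Set.Ico (0:ℝ) ε)ᶜ) ×ˢ (Set.univ : Set ℝ)) := measure_union_le _ _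
    _ = 0 := by
        rw [hempty, measure_empty, Measure.prod_prod, hcompl, zero_mul, zero_add]

lemma A_step {ε γ : ℝ} (hγ : 0 < γ) (hγε : γ < ε) (hμ : μ (Set.Ico 0 ε) = 1) :
    ∑' k : ℤ, ∑' j : ℤ, ENNReal.ofReal (negMulLog ((jointT μ ν ε γ k j).toReal))
      ≤ entE (mconv μ ν) γ + ENNReal.ofReal (Real.log 3) := by
  have hε : 0 < ε := hγ.trans hγε
  rw [ENNReal.tsum_comm]
  have hle1 : ∀ j : ℤ, mconv μ ν (cell γ j) ≤ 1 := fun j => by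
    rw [← mconv_univ μ ν]; exact measure_mono (Set.subset_univ _)
  have step : ∀ j : ℤ, ∑' k : ℤ, ENNReal.ofReal (negMulLog ((jointT μ ν ε γ k j).toReal))
      ≤ ENNReal.ofReal (negMulLog ((mconv μ ν (cell γ j)).toReal))
        + mconv μ ν (cell γ j) * ENNReal.ofReal (Real.log 3) := by
    intro j
    have key := tsum_negMulLog_le (fun k => jointT μ ν ε γ k j)
      ({⌊(j:ℝ) * γ / ε⌋ - 1, ⌊(j:ℝ) * γ / ε⌋, ⌊(j:ℝ) * γ / ε⌋ + 1} : Finset ℤ) 3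
      (by norm_num)
      (fun k hk => jointT_vanish μ ν hγ hγε hμ j k (by simpa using hk))
      (by rw [tsum_jointT_col μ ν hε j]; exact hle1 j)
      (le_trans (Finset.card_insert_le _ _)
        (le_trans (add_le_add_left (Finset.card_insert_le _ _) 1) (by simp)))
    rw [tsum_jointT_col μ ν hε j] at key
    norm_num at key
    exact key
  calc ∑' j : ℤ, ∑' k : ℤ, ENNReal.ofReal (negMulLog ((jointT μ ν ε γ k j).toReal))
      ≤ ∑' j : ℤ, (ENNReal.ofReal (negMulLog ((mconv μ ν (cell γ j)).toReal))
        + mconv μ ν (cell γ j) * ENNReal.ofReal (Real.log 3)) := ENNReal.tsum_le_tsum step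
    _ = entE (mconv μ ν) γ + (∑' j : ℤ, mconv μ ν (cell γ j)) * ENNReal.ofReal (Real.log 3) := by
        rw [ENNReal.tsum_add, ENNReal.tsum_mul_right, entE_eq]
    _ = entE (mconv μ ν) γ + ENNReal.ofReal (Real.log 3) := by
        rw [tsum_measure_cell (mconv μ ν) hγ, mconv_univ μ ν, one_mul]

lemma B_step {ε γ : ℝ} (hγ : 0 < γ) (hε : 0 < ε) :
    entE ν ε + (entE μ γ - ENNReal.ofReal (Real.log 2))
      ≤ ∑' k : ℤ, ∑' j : ℤ, ENNReal.ofReal (negMulLog ((jointT μ ν ε γ k j).toReal)) := by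
  calc entE ν ε + (entE μ γ - ENNReal.ofReal (Real.log 2))
      = (∑' k : ℤ, ENNReal.ofReal (negMulLog ((ν (cell ε k)).toReal)))
        + (∑' k : ℤ, ν (cell ε k)) * (entE μ γ - ENNReal.ofReal (Real.log 2)) := by
        rw [entE_eq, tsum_measure_cell ν hε, measure_univ, one_mul]
    _ = ∑' k : ℤ, (ENNReal.ofReal (negMulLog ((ν (cell ε k)).toReal))
        + ν (cell ε k) * (entE μ γ - ENNReal.ofReal (Real.log 2))) := by
        rw [ENNReal.tsum_add, ENNReal.tsum_mul_right]
    _ ≤ _ := ENNReal.tsum_le_tsum fun k => claim_k μ ν hγ hε k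

end Astep

theorem entropy_convolution_lower_bound :
    ∃ C : ENNReal, C ≠ ⊤ ∧
      ∀ (μ ν : Measure ℝ), IsProbabilityMeasure μ → IsProbabilityMeasure ν →
        ∀ ε γ : ℝ, 0 < γ → γ < ε → μ (Set.Ico 0 ε) = 1 →
          entE ν ε + entE μ γ ≤ entE (mconv μ ν) γ + C := by
  refine ⟨ENNReal.ofReal (Real.log 3) + ENNReal.ofReal (Real.log 2),
    ENNReal.add_ne_top.2 ⟨ENNReal.ofReal_ne_top, ENNReal.ofReal_ne_top⟩, ?_⟩
  intro μ ν hμp hνp ε γ hγ hγε hμ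
  haveI := hμp; haveI := hνp
  have hε : 0 < ε := hγ.trans hγε
  calc entE ν ε + entE μ γ
      ≤ entE ν ε + ((entE μ γ - ENNReal.ofReal (Real.log 2)) + ENNReal.ofReal (Real.log 2)) :=
        add_le_add_right le_tsub_add _
    _ = (entE ν ε + (entE μ γ - ENNReal.ofReal (Real.log 2))) + ENNReal.ofReal (Real.log 2) := by
        rw [add_assoc]
    _ ≤ (∑' k : ℤ, ∑' j : ℤ, ENNReal.ofReal (negMulLog ((jointT μ ν ε γ k j).toReal)))
        + ENNReal.ofReal (Real.log 2) := add_le_add_left (B_step μ ν hγ hε) _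
    _ ≤ (entE (mconv μ ν) γ + ENNReal.ofReal (Real.log 3)) + ENNReal.ofReal (Real.log 2) :=
        add_le_add_left (A_step μ ν hγ hγε hμ) _
    _ = entE (mconv μ ν) γ + (ENNReal.ofReal (Real.log 3) + ENNReal.ofReal (Real.log 2)) := by
        rw [add_assoc]

end Aux
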